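/- Let f = (f₁,…,f_n) be a system of homogeneous real polynomials in n+1 variables of degrees d₁,…,d_n, with ‖f‖ = max_i ‖f_i‖ where ‖·‖ is the Bombieri–Weyl norm, and let D = max_i d_i. Then for all x, y on the unit sphere S^n with angular distance d(x,y) ≤ √2, one has ‖f(x) − f(y)‖_∞ ≤ ‖f‖ · √D · d(x,y). -/

import Mathlib

open MvPolynomial Finset
open scoped RealInnerProductSpace

/-- The Bombieri–Weyl inner product on (homogeneous) polynomials. -/
noncomputable def bwInner {m : ℕ} (g h : MvPolynomial (Fin m) ℝ) : ℝ :=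
  ∑ J ∈ g.support ∪ h.support,
    g.coeff J * h.coeff J / (Nat.multinomial Finset.univ J : ℝ)

/-- The Bombieri–Weyl norm. -/
noncomputable def bwNorm {m : ℕ} (g : MvPolynomial (Fin m) ℝ) : ℝ :=
  Real.sqrt (bwInner g g)

noncomputable def bwK {m : ℕ} (x : Fin m → ℝ) (dd : ℕ) : MvPolynomial (Fin m) ℝ :=
  (∑ j, C (x j) * X j) ^ dd

lemma bwK_isHomogeneous {m : ℕ} (x : Fin m → ℝ) (dd : ℕ) :
    (bwK x dd).IsHomogeneous dd := by
  have h : (∑ j, C (x j) * X j : MvPolynomial (Fin m) ℝ).IsHomogeneous 1 :=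
    MvPolynomial.IsHomogeneous.sum _ _ _ fun j _ => isHomogeneous_C_mul_X _ _
  simpa [bwK] using h.pow dd

lemma coeff_bwK {m : ℕ} (x : Fin m → ℝ) (dd : ℕ) (J : Fin m →₀ ℕ)
    (hJ : ∑ j, J j = dd) :
    coeff J (bwK x dd) = (Nat.multinomial Finset.univ J : ℝ) * ∏ j, x j ^ J j := by
  classical
  rw [bwK, Finset.sum_pow_eq_sum_piAntidiag]
  have hterm : ∀ k : Fin m → ℕ,
      ((Nat.multinomial Finset.univ k : MvPolynomial (Fin m) ℝ) *
        ∏ j, (C (x j) * X j) ^ k j) =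
      monomial (Finsupp.equivFunOnFinite.symm k)
        ((Nat.multinomial Finset.univ k : ℝ) * ∏ j, x j ^ k j) := by
    intro k
    have h1 : ∀ j, (C (x j) * X j : MvPolynomial (Fin m) ℝ) ^ k j
        = C (x j ^ k j) * X j ^ k j := by
      intro j; rw [mul_pow, ← C_pow]
    simp_rw [h1]
    rw [Finset.prod_mul_distrib, ← map_prod]
    have h2 : (∏ j, (X j : MvPolynomial (Fin m) ℝ) ^ k j)
        = monomial (Finsupp.equivFunOnFinite.symm k) 1 := by
      rw [← prod_X_pow_eq_monomial]
      simp only [Finsupp.coe_equivFunOnFinite_symm]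
      exact (Finset.prod_subset (Finset.subset_univ _) (fun j _ hj => by
        have : k j = 0 := by
          simpa [Finsupp.mem_support_iff,
            Finsupp.coe_equivFunOnFinite_symm] using hj
        simp [this])).symm
    rw [h2]
    rw [show ((Nat.multinomial Finset.univ k : ℕ) : MvPolynomial (Fin m) ℝ)
        = C ((Nat.multinomial Finset.univ k : ℕ) : ℝ) by push_cast; rfl]
    rw [C_mul_monomial, C_mul_monomial, mul_one]
  simp_rw [hterm]
  rw [MvPolynomial.coeff_sum]
  simp_rw [MvPolynomial.coeff_monomial]
  rw [Finset.sum_eq_single_of_mem (⇑J)]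
  · simp [Finsupp.equivFunOnFinite_symm_coe]
  · rw [Finset.mem_piAntidiag]
    exact ⟨hJ, fun i _ => Finset.mem_univ i⟩
  · intro k _ hk
    rw [if_neg]
    intro h
    apply hk
    rw [← Finsupp.equivFunOnFinite_symm_coe J] at h
    have := Finsupp.equivFunOnFinite.symm.injective h
    exact this

lemma bwInner_eq_sum {m : ℕ} (g h : MvPolynomial (Fin m) ℝ) (S : Finset (Fin m →₀ ℕ))
    (hg : g.support ⊆ S) (hh : h.support ⊆ S) :
    bwInner g h = ∑ J ∈ S,
      g.coeff J * h.coeff J / (Nat.multinomial Finset.univ J : ℝ) := by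
  classical
  refine Finset.sum_subset (Finset.union_subset hg hh) ?_
  intro J _ hJ
  rw [Finset.notMem_union] at hJ
  have : g.coeff J = 0 := MvPolynomial.notMem_support_iff.mp hJ.1
  simp [this]

lemma bwInner_self_nonneg {m : ℕ} (g : MvPolynomial (Fin m) ℝ) : 0 ≤ bwInner g g := by
  refine Finset.sum_nonneg fun J _ => ?_
  have h1 : (0:ℝ) ≤ g.coeff J * g.coeff J := mul_self_nonneg _
  have h2 : (0:ℝ) ≤ (Nat.multinomial Finset.univ J : ℝ) := Nat.cast_nonneg _
  positivity

lemma bwNorm_nonneg {m : ℕ} (g : MvPolynomial (Fin m) ℝ) : 0 ≤ bwNorm g :=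
  Real.sqrt_nonneg _

lemma bwNorm_sq {m : ℕ} (g : MvPolynomial (Fin m) ℝ) :
    bwNorm g ^ 2 = bwInner g g :=
  Real.sq_sqrt (bwInner_self_nonneg g)

lemma abs_bwInner_le {m : ℕ} (g h : MvPolynomial (Fin m) ℝ) :
    |bwInner g h| ≤ bwNorm g * bwNorm h := by
  classical
  set S := g.support ∪ h.support with hS
  set u : (Fin m →₀ ℕ) → ℝ :=
    fun J => g.coeff J / Real.sqrt (Nat.multinomial Finset.univ J : ℝ) with hu
  set v : (Fin m →₀ ℕ) → ℝ :=
    fun J => h.coeff J / Real.sqrt (Nat.multinomial Finset.univ J : ℝ) with hv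
  have hM : ∀ J : Fin m →₀ ℕ, (0:ℝ) < (Nat.multinomial Finset.univ J : ℝ) := by
    intro J; exact_mod_cast Nat.multinomial_pos _ _
  have hsq : ∀ J : Fin m →₀ ℕ,
      Real.sqrt (Nat.multinomial Finset.univ J : ℝ) *
      Real.sqrt (Nat.multinomial Finset.univ J : ℝ) = (Nat.multinomial Finset.univ J : ℝ) :=
    fun J => Real.mul_self_sqrt (le_of_lt (hM J))
  have huv : ∀ (a b : MvPolynomial (Fin m) ℝ) (J : Fin m →₀ ℕ),
      (a.coeff J / Real.sqrt (Nat.multinomial Finset.univ J : ℝ)) *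
      (b.coeff J / Real.sqrt (Nat.multinomial Finset.univ J : ℝ)) =
      a.coeff J * b.coeff J / (Nat.multinomial Finset.univ J : ℝ) := by
    intro a b J
    rw [div_mul_div_comm, hsq J]
  have h1 : bwInner g h = ∑ J ∈ S, u J * v J := by
    rw [bwInner_eq_sum g h S Finset.subset_union_left Finset.subset_union_right]
    exact Finset.sum_congr rfl fun J _ => (huv g h J).symm
  have h2 : bwInner g g = ∑ J ∈ S, u J ^ 2 := by
    rw [bwInner_eq_sum g g S Finset.subset_union_left Finset.subset_union_left]
    refine Finset.sum_congr rfl fun J _ => ?_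
    rw [sq]; exact (huv g g J).symm
  have h3 : bwInner h h = ∑ J ∈ S, v J ^ 2 := by
    rw [bwInner_eq_sum h h S Finset.subset_union_right Finset.subset_union_right]
    refine Finset.sum_congr rfl fun J _ => ?_
    rw [sq]; exact (huv h h J).symm
  have hcs := Finset.sum_mul_sq_le_sq_mul_sq S u v
  rw [h1, bwNorm, bwNorm, h2, h3]
  rw [← Real.sqrt_sq_eq_abs, ← Real.sqrt_mul (Finset.sum_nonneg fun J _ => sq_nonneg (u J))]
  exact Real.sqrt_le_sqrt hcs

lemma bwInner_comm {m : ℕ} (g h : MvPolynomial (Fin m) ℝ) :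
    bwInner g h = bwInner h g := by
  classical
  rw [bwInner_eq_sum g h (g.support ∪ h.support) Finset.subset_union_left
      Finset.subset_union_right,
    bwInner_eq_sum h g (g.support ∪ h.support) Finset.subset_union_right
      Finset.subset_union_left]
  exact Finset.sum_congr rfl fun J _ => by ring

lemma bwInner_sub_right {m : ℕ} (g h₁ h₂ : MvPolynomial (Fin m) ℝ) :
    bwInner g (h₁ - h₂) = bwInner g h₁ - bwInner g h₂ := by
  classical
  set S := g.support ∪ h₁.support ∪ h₂.support ∪ (h₁ - h₂).support with hS
  have hgS : g.support ⊆ S := by intro a ha; simp [hS, ha]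
  have h1S : h₁.support ⊆ S := by intro a ha; simp [hS, ha]
  have h2S : h₂.support ⊆ S := by intro a ha; simp [hS, ha]
  have hdS : (h₁ - h₂).support ⊆ S := by intro a ha; simp [hS, ha]
  rw [bwInner_eq_sum g (h₁ - h₂) S hgS hdS, bwInner_eq_sum g h₁ S hgS h1S,
    bwInner_eq_sum g h₂ S hgS h2S, ← Finset.sum_sub_distrib]
  refine Finset.sum_congr rfl fun J _ => ?_
  rw [MvPolynomial.coeff_sub]
  ring

lemma bwInner_bwK {m : ℕ} {dd : ℕ} (g : MvPolynomial (Fin m) ℝ)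
    (hg : g.IsHomogeneous dd) (x : Fin m → ℝ) :
    bwInner g (bwK x dd) = eval x g := by
  classical
  have hdeg : ∀ J ∈ g.support ∪ (bwK x dd).support, ∑ j, J j = dd := by
    intro J hJ
    have hdJ : J.degree = dd := by
      rcases Finset.mem_union.mp hJ with h | h
      · by_contra hne
        exact MvPolynomial.mem_support_iff.mp h (hg.coeff_eq_zero hne)
      · by_contra hne
        exact MvPolynomial.mem_support_iff.mp h
          ((bwK_isHomogeneous x dd).coeff_eq_zero hne)
    rw [← hdJ, Finsupp.degree]
    exact (Finset.sum_subset (Finset.subset_univ _) fun j _ hj => by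
      simpa [Finsupp.mem_support_iff] using hj).symm
  rw [bwInner, eval_eq']
  rw [Finset.sum_subset (Finset.subset_union_left :
    g.support ⊆ g.support ∪ (bwK x dd).support) (fun J _ hJ => by
      have : g.coeff J = 0 := MvPolynomial.notMem_support_iff.mp hJ
      simp [this])]
  refine Finset.sum_congr rfl fun J hJ => ?_
  rw [coeff_bwK x dd J (hdeg J hJ)]
  have hM : ((Nat.multinomial Finset.univ J : ℕ) : ℝ) ≠ 0 := by
    exact_mod_cast (Nat.multinomial_pos _ _).ne'
  field_simp

lemma eval_bwK {m : ℕ} (x y : Fin m → ℝ) (dd : ℕ) :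
    eval y (bwK x dd) = (∑ j, x j * y j) ^ dd := by
  rw [bwK, map_pow, map_sum]
  simp

lemma one_sub_cos_sq (θ : ℝ) (h0 : 0 ≤ θ) : 1 - Real.cos θ ≤ θ ^ 2 / 2 := by
  have h1 : Real.sin (θ / 2) ^ 2 = 1 / 2 - Real.cos θ / 2 := by
    have := Real.sin_sq_eq_half_sub (θ / 2)
    rwa [show 2 * (θ / 2) = θ by ring] at this
  have h4 : Real.sin (θ / 2) ^ 2 ≤ (θ / 2) ^ 2 := Real.sin_sq_le_sq
  nlinarith

lemma key_pow_bound (c : ℝ) (hc : |c| ≤ 1) (dd : ℕ) :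
    1 - c ^ dd ≤ (dd : ℝ) * (1 - c) := by
  have h1 : (∑ k ∈ Finset.range dd, c ^ k) * (c - 1) = c ^ dd - 1 := geom_sum_mul c dd
  have h2 : ∑ k ∈ Finset.range dd, c ^ k ≤ (dd : ℝ) := by
    calc ∑ k ∈ Finset.range dd, c ^ k ≤ ∑ k ∈ Finset.range dd, (1:ℝ) := by
          refine Finset.sum_le_sum fun k _ => ?_
          calc c ^ k ≤ |c ^ k| := le_abs_self _
            _ = |c| ^ k := abs_pow c k
            _ ≤ 1 := pow_le_one₀ (abs_nonneg c) hc
      _ = (dd : ℝ) := by simp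
  have hc1 : c ≤ 1 := le_of_abs_le hc
  nlinarith [mul_le_mul_of_nonneg_right h2 (by linarith : (0:ℝ) ≤ 1 - c)]

/-- The exclusion lemma (Lipschitz bound): for a system of homogeneous
polynomials `f`, points `x y` on the unit sphere at angular distance
`d(x,y) = arccos⟪x,y⟫ ≤ √2`, one has `‖f(x)−f(y)‖_∞ ≤ ‖f‖ √D d(x,y)`,
where `‖f‖ = max_i ‖f_i‖` (Bombieri–Weyl) and `D = max_i d_i`. -/
theorem stmt_3 (n : ℕ) (hn : 0 < n) (d : Fin n → ℕ)
    (f : Fin n → MvPolynomial (Fin (n + 1)) ℝ)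
    (hf : ∀ i, (f i).IsHomogeneous (d i))
    (x y : EuclideanSpace ℝ (Fin (n + 1)))
    (hx : ‖x‖ = 1) (hy : ‖y‖ = 1)
    (hxy : Real.arccos ⟪x, y⟫ ≤ Real.sqrt 2) :
    (Finset.univ.sup' ⟨⟨0, hn⟩, Finset.mem_univ _⟩
        fun i => |eval (fun j => x j) (f i) - eval (fun j => y j) (f i)|) ≤
      (Finset.univ.sup' ⟨⟨0, hn⟩, Finset.mem_univ _⟩ fun i => bwNorm (f i)) *
        Real.sqrt ((Finset.univ.sup d : ℕ) : ℝ) * Real.arccos ⟪x, y⟫ := by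
  classical
  set x' : Fin (n + 1) → ℝ := fun j => x j with hx'
  set y' : Fin (n + 1) → ℝ := fun j => y j with hy'
  set c : ℝ := ⟪x, y⟫ with hc
  set θ : ℝ := Real.arccos c with hθ
  have hinner : c = ∑ j, x' j * y' j := by
    simp [hc, PiLp.inner_apply, RCLike.inner_apply, x', y']
    exact Finset.sum_congr rfl fun j _ => mul_comm _ _
  have hxx : (∑ j, x' j * x' j) = 1 := by
    have h := real_inner_self_eq_norm_sq x
    rw [hx] at h
    simp only [PiLp.inner_apply, RCLike.inner_apply, conj_trivial] at h
    simpa using h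
  have hyy : (∑ j, y' j * y' j) = 1 := by
    have h := real_inner_self_eq_norm_sq y
    rw [hy] at h
    simp only [PiLp.inner_apply, RCLike.inner_apply, conj_trivial] at h
    simpa using h
  have hcabs : |c| ≤ 1 := by
    have h := abs_real_inner_le_norm x y
    rw [hx, hy] at h
    simpa [hc] using h
  have hθ0 : (0:ℝ) ≤ θ := Real.arccos_nonneg _
  have hcos : Real.cos θ = c :=
    Real.cos_arccos (neg_le_of_abs_le hcabs) (le_of_abs_le hcabs)
  set D : ℝ := ((Finset.univ.sup d : ℕ) : ℝ) with hD
  have hD0 : (0:ℝ) ≤ D := Nat.cast_nonneg _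
  apply Finset.sup'_le
  intro i _
  set di := d i with hdi
  have hdiD : (di : ℝ) ≤ D := by
    exact_mod_cast Nat.cast_le.mpr (Finset.le_sup (f := d) (Finset.mem_univ i))
  have hKx : bwInner (f i) (bwK x' di) = eval x' (f i) := bwInner_bwK _ (hf i) _
  have hKy : bwInner (f i) (bwK y' di) = eval y' (f i) := bwInner_bwK _ (hf i) _
  have heval : eval x' (f i) - eval y' (f i)
      = bwInner (f i) (bwK x' di - bwK y' di) := by
    rw [bwInner_sub_right, hKx, hKy]
  have hKxKx : bwInner (bwK x' di) (bwK x' di) = 1 := by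
    rw [bwInner_bwK _ (bwK_isHomogeneous x' di) x', eval_bwK, hxx, one_pow]
  have hKyKy : bwInner (bwK y' di) (bwK y' di) = 1 := by
    rw [bwInner_bwK _ (bwK_isHomogeneous y' di) y', eval_bwK, hyy, one_pow]
  have hKxKy : bwInner (bwK x' di) (bwK y' di) = c ^ di := by
    rw [bwInner_bwK _ (bwK_isHomogeneous x' di) y', eval_bwK, ← hinner]
  have hdiff : bwInner (bwK x' di - bwK y' di) (bwK x' di - bwK y' di)
      = 2 * (1 - c ^ di) := by
    rw [bwInner_sub_right,
      bwInner_comm (bwK x' di - bwK y' di) (bwK x' di),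
      bwInner_comm (bwK x' di - bwK y' di) (bwK y' di),
      bwInner_sub_right, bwInner_sub_right, hKxKx, hKyKy, hKxKy,
      bwInner_comm (bwK y' di) (bwK x' di), hKxKy]
    ring
  have hpow := key_pow_bound c hcabs di
  have hcosb := one_sub_cos_sq θ hθ0
  rw [hcos] at hcosb
  have h2 : 2 * (1 - c ^ di) ≤ D * θ ^ 2 := by
    nlinarith [sq_nonneg θ, Nat.cast_nonneg (α := ℝ) di,
      mul_le_mul_of_nonneg_right hdiD (sq_nonneg θ)]
  have hnormdiff : bwNorm (bwK x' di - bwK y' di) ≤ Real.sqrt D * θ := by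
    rw [bwNorm, hdiff]
    calc Real.sqrt (2 * (1 - c ^ di)) ≤ Real.sqrt (D * θ ^ 2) :=
          Real.sqrt_le_sqrt h2
      _ = Real.sqrt D * θ := by rw [Real.sqrt_mul hD0, Real.sqrt_sq hθ0]
  have hfb : bwNorm (f i) ≤
      Finset.univ.sup' ⟨⟨0, hn⟩, Finset.mem_univ _⟩ fun i => bwNorm (f i) :=
    Finset.le_sup' (fun i => bwNorm (f i)) (Finset.mem_univ i)
  calc |eval x' (f i) - eval y' (f i)|
      = |bwInner (f i) (bwK x' di - bwK y' di)| := by rw [heval]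
    _ ≤ bwNorm (f i) * bwNorm (bwK x' di - bwK y' di) := abs_bwInner_le _ _
    _ ≤ bwNorm (f i) * (Real.sqrt D * θ) :=
        mul_le_mul_of_nonneg_left hnormdiff (bwNorm_nonneg _)
    _ ≤ (Finset.univ.sup' ⟨⟨0, hn⟩, Finset.mem_univ _⟩ fun i => bwNorm (f i)) *
          (Real.sqrt D * θ) :=
        mul_le_mul_of_nonneg_right hfb
          (mul_nonneg (Real.sqrt_nonneg _) hθ0)
    _ = (Finset.univ.sup' ⟨⟨0, hn⟩, Finset.mem_univ _⟩ fun i => bwNorm (f i)) *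
          Real.sqrt D * θ := by ring
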